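/- Let K be a field, G a finite set of monomials of positive degree in K[x_1,…,x_n], φ_G : S = K[T_m : m ∈ G] → K[x_1,…,x_n] the K-algebra map with φ_G(T_m) = m, and J = ker(φ_G). Let B be a set of binomials contained in J. Then B generates the ideal J if and only if for every monomial μ of K[x_1,…,x_n] the fiber graph Γ_{μ,B} is either empty or connected. -/

import Mathlib

open MvPolynomial

/-- The edge relation of the fiber graph: two exponent vectors `γ`, `γ'` of monomials
`T^γ`, `T^{γ'}` of `S` are related if there are a binomial
`A − A' = T^a − T^{a'} ∈ B` and a monomial `T^u` with `{T^γ, T^{γ'}} = {T^u·A, T^u·A'}`. -/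
def fiberAdj (K : Type*) [Field K] (σ : Type*) (B : Set (MvPolynomial σ K))
    (γ γ' : σ →₀ ℕ) : Prop :=
  γ ≠ γ' ∧ ∃ a a' u : σ →₀ ℕ,
    (MvPolynomial.monomial a (1 : K) - MvPolynomial.monomial a' (1 : K)) ∈ B ∧
    ((γ = u + a ∧ γ' = u + a') ∨ (γ = u + a' ∧ γ' = u + a))

section Aux

variable {K : Type*} [Field K] {τ ι : Type*}

/-- Total weight of an exponent vector. -/
noncomputable def Wt (w : τ → (ι →₀ ℕ)) (γ : τ →₀ ℕ) : ι →₀ ℕ :=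
  γ.sum fun t e => e • w t

lemma Wt_add (w : τ → (ι →₀ ℕ)) (x y : τ →₀ ℕ) : Wt w (x + y) = Wt w x + Wt w y :=
  Finsupp.sum_add_index' (fun t => zero_smul ℕ (w t)) (fun t b c => add_smul b c (w t))

lemma aeval_monomial_one (w : τ → (ι →₀ ℕ)) (γ : τ →₀ ℕ) (c : K) :
    (aeval fun t => monomial (w t) (1 : K)) (monomial γ c) = monomial (Wt w γ) c := by
  rw [aeval_monomial, Wt, monomial_finsupp_sum_index, algebraMap_eq]
  congr 1
  exact Finsupp.prod_congr fun t _ => by rw [monomial_pow, one_pow]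

lemma coeff_aeval [DecidableEq (ι →₀ ℕ)] (w : τ → (ι →₀ ℕ)) (f : MvPolynomial τ K)
    (μ : ι →₀ ℕ) :
    coeff μ ((aeval fun t => monomial (w t) (1 : K)) f)
      = ∑ γ ∈ f.support, if Wt w γ = μ then coeff γ f else 0 := by
  conv_lhs => rw [f.as_sum, map_sum]
  rw [coeff_sum]
  refine Finset.sum_congr rfl fun γ _ => ?_
  classical
  rw [aeval_monomial_one, coeff_monomial]
  split_ifs <;> rfl

lemma fiberAdj_symm (B : Set (MvPolynomial τ K)) : Symmetric (fiberAdj K τ B) := by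
  rintro γ γ' ⟨hne, a, a', u, hb, h⟩
  exact ⟨hne.symm, a, a', u, hb, (h.imp And.symm And.symm).symm⟩

lemma fiberAdj_translate {B : Set (MvPolynomial τ K)} {γ γ' : τ →₀ ℕ} (u : τ →₀ ℕ)
    (h : fiberAdj K τ B γ γ') : fiberAdj K τ B (u + γ) (u + γ') := by
  obtain ⟨hne, a, a', v, hb, h⟩ := h
  refine ⟨fun he => hne (add_left_cancel he), a, a', u + v, hb, ?_⟩
  rcases h with ⟨rfl, rfl⟩ | ⟨rfl, rfl⟩
  · exact Or.inl ⟨(add_assoc u v a).symm, (add_assoc u v a').symm⟩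
  · exact Or.inr ⟨(add_assoc u v a').symm, (add_assoc u v a).symm⟩

lemma fiberAdj_sub_mem {B : Set (MvPolynomial τ K)} {γ γ' : τ →₀ ℕ}
    (h : fiberAdj K τ B γ γ') :
    monomial γ (1 : K) - monomial γ' 1 ∈ Ideal.span B := by
  obtain ⟨-, a, a', u, hb, h | h⟩ := h
  · obtain ⟨rfl, rfl⟩ := h
    have : monomial (u + a) (1 : K) - monomial (u + a') 1
        = monomial u 1 * (monomial a 1 - monomial a' 1) := by
      rw [mul_sub, monomial_mul, monomial_mul, one_mul]
    rw [this]; exact Ideal.mul_mem_left _ _ (Ideal.subset_span hb)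
  · obtain ⟨rfl, rfl⟩ := h
    have : monomial (u + a') (1 : K) - monomial (u + a) 1
        = -(monomial u 1 * (monomial a 1 - monomial a' 1)) := by
      rw [mul_sub, monomial_mul, monomial_mul, one_mul, neg_sub]
    rw [this]; exact neg_mem (Ideal.mul_mem_left _ _ (Ideal.subset_span hb))

lemma fiberAdj_wt_eq {w : τ → (ι →₀ ℕ)} {B : Set (MvPolynomial τ K)}
    (hBJ : ∀ b ∈ B, (aeval fun t => monomial (w t) (1 : K)) b = 0)
    {γ γ' : τ →₀ ℕ} (h : fiberAdj K τ B γ γ') : Wt w γ = Wt w γ' := by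
  obtain ⟨-, a, a', u, hb, h⟩ := h
  have h0 := hBJ _ hb
  rw [map_sub, aeval_monomial_one, aeval_monomial_one, sub_eq_zero,
    monomial_eq_monomial_iff] at h0
  have haa : Wt w a = Wt w a' := by
    rcases h0 with ⟨h, -⟩ | ⟨h, -⟩
    · exact h
    · exact absurd h one_ne_zero
  rcases h with ⟨rfl, rfl⟩ | ⟨rfl, rfl⟩ <;> rw [Wt_add, Wt_add, haa]

variable {E : (τ →₀ ℕ) → (τ →₀ ℕ) → Prop}

lemma sum_ite_support_subset (P : (τ →₀ ℕ) → Prop) [DecidablePred P] (f : MvPolynomial τ K)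
    {s : Finset (τ →₀ ℕ)} (hs : f.support ⊆ s) :
    ∑ δ ∈ f.support, (if P δ then coeff δ f else 0) = ∑ δ ∈ s, if P δ then coeff δ f else 0 :=
  Finset.sum_subset hs fun δ _ hδ => by
    rw [MvPolynomial.notMem_support_iff.mp hδ, ite_self]

lemma span_rel_sum_zero (P : (τ →₀ ℕ) → Prop) [DecidablePred P]
    (hcl : ∀ a b, E a b → (P a ↔ P b))
    {f : MvPolynomial τ K}
    (hf : f ∈ Submodule.span K
      {p : MvPolynomial τ K | ∃ γ γ', E γ γ' ∧ p = monomial γ (1 : K) - monomial γ' 1}) :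
    ∑ δ ∈ f.support, (if P δ then coeff δ f else 0) = 0 := by
  classical
  induction hf using Submodule.span_induction with
  | mem g hg =>
      obtain ⟨γ, γ', hE, rfl⟩ := hg
      by_cases hne : γ = γ'
      · subst hne; simp
      have hsupp : (monomial γ (1 : K) - monomial γ' 1).support ⊆ {γ, γ'} := by
        intro δ hδ
        rw [Finset.mem_insert, Finset.mem_singleton]
        by_contra hc
        push_neg at hc
        exact MvPolynomial.mem_support_iff.mp hδ
          (by simp [coeff_sub, coeff_monomial, (Ne.symm hc.1 : ¬ γ = δ), (Ne.symm hc.2 : ¬ γ' = δ)])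
      rw [sum_ite_support_subset P _ hsupp, Finset.sum_pair hne]
      have h1 : coeff γ (monomial γ (1 : K) - monomial γ' 1) = 1 := by
        simp [coeff_sub, coeff_monomial, hne, (show ¬ γ' = γ from fun h => hne h.symm)]
      have h2 : coeff γ' (monomial γ (1 : K) - monomial γ' 1) = -1 := by
        simp [coeff_sub, coeff_monomial, hne, (show ¬ γ' = γ from fun h => hne h.symm)]
      rw [h1, h2]
      by_cases hp : P γ
      · rw [if_pos hp, if_pos ((hcl _ _ hE).mp hp)]; ring
      · rw [if_neg hp, if_neg (fun h => hp ((hcl _ _ hE).mpr h))]; ring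
  | zero => simp
  | add p q hp hq ihp ihq =>
      have hsub : (p + q).support ⊆ p.support ∪ q.support := MvPolynomial.support_add
      rw [sum_ite_support_subset P _ hsub]
      have : ∑ δ ∈ p.support ∪ q.support, (if P δ then coeff δ (p + q) else 0)
          = (∑ δ ∈ p.support ∪ q.support, if P δ then coeff δ p else 0)
            + ∑ δ ∈ p.support ∪ q.support, if P δ then coeff δ q else 0 := by
        rw [← Finset.sum_add_distrib]
        refine Finset.sum_congr rfl fun δ _ => ?_
        split_ifs
        · rw [coeff_add]
        · rw [add_zero]
      rw [this, ← sum_ite_support_subset P p Finset.subset_union_left,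
        ← sum_ite_support_subset P q Finset.subset_union_right, ihp, ihq, add_zero]
  | smul c p hp ihp =>
      have hsub : (c • p).support ⊆ p.support := MvPolynomial.support_smul
      rw [sum_ite_support_subset P _ hsub]
      have : ∑ δ ∈ p.support, (if P δ then coeff δ (c • p) else 0)
          = c * ∑ δ ∈ p.support, (if P δ then coeff δ p else 0) := by
        rw [Finset.mul_sum]
        refine Finset.sum_congr rfl fun δ _ => ?_
        split_ifs
        · rw [MvPolynomial.coeff_smul, smul_eq_mul]
        · rw [mul_zero]
      rw [this, ihp, mul_zero]

lemma diff_mem_span_rel (hrefl : ∀ a, E a a) (hcl : ∀ a b c, E a b → (E c a ↔ E c b))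
    {x y : τ →₀ ℕ}
    (hx : monomial x (1 : K) - monomial y 1 ∈
      Submodule.span K
        {p : MvPolynomial τ K | ∃ γ γ', E γ γ' ∧ p = monomial γ (1 : K) - monomial γ' 1})
    (hxy : x ≠ y) : E x y := by
  classical
  by_contra hE
  have h0 := span_rel_sum_zero (E x) (fun a b h => hcl a b x h) hx
  have hsupp : (monomial x (1 : K) - monomial y 1).support ⊆ {x, y} := by
    intro δ hδ
    rw [Finset.mem_insert, Finset.mem_singleton]
    by_contra hc
    push_neg at hc
    exact MvPolynomial.mem_support_iff.mp hδ
      (by simp [coeff_sub, coeff_monomial, (Ne.symm hc.1 : ¬ x = δ), (Ne.symm hc.2 : ¬ y = δ)])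
  have h1 : coeff x (monomial x (1 : K) - monomial y 1) = 1 := by
    simp [coeff_sub, coeff_monomial, hxy, (show ¬ y = x from fun h => hxy h.symm)]
  have h2 : coeff y (monomial x (1 : K) - monomial y 1) = -1 := by
    simp [coeff_sub, coeff_monomial, hxy, (show ¬ y = x from fun h => hxy h.symm)]
  rw [sum_ite_support_subset _ _ hsupp, Finset.sum_pair hxy, h1, h2,
    if_pos (hrefl x), if_neg hE, add_zero] at h0
  exact one_ne_zero h0

lemma mul_mem_diffSpan (hE : ∀ u γ γ', E γ γ' → E (u + γ) (u + γ'))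
    (p : MvPolynomial τ K) {x : MvPolynomial τ K}
    (hx : x ∈ Submodule.span K
      {q : MvPolynomial τ K | ∃ γ γ', E γ γ' ∧ q = monomial γ (1 : K) - monomial γ' 1}) :
    p * x ∈ Submodule.span K
      {q : MvPolynomial τ K | ∃ γ γ', E γ γ' ∧ q = monomial γ (1 : K) - monomial γ' 1} := by
  induction hx using Submodule.span_induction with
  | mem g hg =>
      obtain ⟨γ, γ', hE', rfl⟩ := hg
      rw [p.as_sum, Finset.sum_mul]
      refine Submodule.sum_mem _ fun u _ => ?_
      have h1 : monomial u (coeff u p) * (monomial γ (1 : K) - monomial γ' 1)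
          = coeff u p • (monomial (u + γ) (1 : K) - monomial (u + γ') 1) := by
        rw [mul_sub, monomial_mul, monomial_mul, mul_one, smul_sub, smul_monomial,
          smul_monomial, smul_eq_mul, mul_one]
      rw [h1]
      exact Submodule.smul_mem _ _
        (Submodule.subset_span ⟨u + γ, u + γ', hE u _ _ hE', rfl⟩)
  | zero => rw [mul_zero]; exact zero_mem _
  | add a b _ _ iha ihb => rw [mul_add]; exact add_mem iha ihb
  | smul c a _ iha => rw [mul_smul_comm]; exact Submodule.smul_mem _ _ iha

lemma ideal_span_le_diffSpan {B : Set (MvPolynomial τ K)}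
    (hE : ∀ u γ γ', E γ γ' → E (u + γ) (u + γ'))
    (hB : ∀ b ∈ B, ∃ γ γ', E γ γ' ∧ b = monomial γ (1 : K) - monomial γ' 1)
    {x : MvPolynomial τ K} (hx : x ∈ Ideal.span B) :
    x ∈ Submodule.span K
      {q : MvPolynomial τ K | ∃ γ γ', E γ γ' ∧ q = monomial γ (1 : K) - monomial γ' 1} := by
  induction hx using Submodule.span_induction with
  | mem b hb => exact Submodule.subset_span (hB b hb)
  | zero => exact zero_mem _
  | add a b _ _ iha ihb => exact add_mem iha ihb
  | smul p a _ iha => rw [smul_eq_mul]; exact mul_mem_diffSpan hE p iha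

end Aux

set_option maxHeartbeats 1000000 in
/-- Proposition 2.5 (generation): for the toric map `φ_G : K[T_m : m ∈ G] → K[x]`,
`φ_G(T_m) = m`, a set `B` of binomials contained in `J = ker φ_G` generates `J`
iff for every monomial `μ` of `K[x]` the fiber graph `Γ_{μ,B}` (with vertex set the
monomials of the fiber of `φ_G` over `μ`) is empty or connected. -/
theorem binomials_generate_iff_fibers_connected
    (K : Type*) [Field K] {n : ℕ}
    (G : Finset (Fin n →₀ ℕ)) (hG : ∀ m ∈ G, m ≠ 0)
    (φ : MvPolynomial {m // m ∈ G} K →ₐ[K] MvPolynomial (Fin n) K)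
    (hφ : φ = MvPolynomial.aeval fun m : {m // m ∈ G} => MvPolynomial.monomial m.1 (1 : K))
    (B : Set (MvPolynomial {m // m ∈ G} K))
    (hBJ : ∀ b ∈ B, φ b = 0)
    (hBbin : ∀ b ∈ B, ∃ a a' : {m // m ∈ G} →₀ ℕ, a ≠ a' ∧
      b = MvPolynomial.monomial a (1 : K) - MvPolynomial.monomial a' (1 : K)) :
    Ideal.span B = RingHom.ker φ ↔
      ∀ μ : Fin n →₀ ℕ,
        IsEmpty {γ : {m // m ∈ G} →₀ ℕ //
            φ (MvPolynomial.monomial γ (1 : K)) = MvPolynomial.monomial μ (1 : K)} ∨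
        (SimpleGraph.fromRel fun γ γ' : {γ : {m // m ∈ G} →₀ ℕ //
            φ (MvPolynomial.monomial γ (1 : K)) = MvPolynomial.monomial μ (1 : K)} =>
              fiberAdj K _ B γ.1 γ'.1).Connected := by
  classical
  subst hφ
  set wv : {m // m ∈ G} → (Fin n →₀ ℕ) := fun m => m.1 with hwv
  have hmono : ∀ (γ : {m // m ∈ G} →₀ ℕ) (c : K),
      (aeval fun m : {m // m ∈ G} => monomial m.1 (1 : K)) (monomial γ c)
        = monomial (Wt wv γ) c := fun γ c => aeval_monomial_one wv γ c
  have hBJ' : ∀ b ∈ B, (aeval fun t : {m // m ∈ G} => monomial (wv t) (1 : K)) b = 0 := hBJ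
  constructor
  · -- span = ker → fibers connected
    intro hspan μ
    rcases isEmpty_or_nonempty {γ : {m // m ∈ G} →₀ ℕ //
        (aeval fun m : {m // m ∈ G} => monomial m.1 (1 : K)) (monomial γ (1 : K))
          = monomial μ (1 : K)} with he | hne
    · exact Or.inl he
    right
    rw [SimpleGraph.connected_iff]
    refine ⟨fun x y => ?_, hne⟩
    -- the relation
    have hsymR : Symmetric (fiberAdj K {m // m ∈ G} B) := fiberAdj_symm B
    have hsymRT : Symmetric (Relation.ReflTransGen (fiberAdj K {m // m ∈ G} B)) :=
      fun a b h => by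
        induction h with
        | refl => exact Relation.ReflTransGen.refl
        | tail _ hbc ih => exact Relation.ReflTransGen.head (hsymR hbc) ih
    by_cases hxy : x.1 = y.1
    · exact (Subtype.ext hxy : x = y) ▸ SimpleGraph.Reachable.refl x
    have hker : monomial x.1 (1 : K) - monomial y.1 1 ∈
        RingHom.ker (aeval fun m : {m // m ∈ G} => monomial m.1 (1 : K) :
          MvPolynomial {m // m ∈ G} K →ₐ[K] MvPolynomial (Fin n) K) := by
      rw [RingHom.mem_ker, map_sub, x.2, y.2, sub_self]
    rw [← hspan] at hker
    have hM := ideal_span_le_diffSpan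
      (E := Relation.ReflTransGen (fiberAdj K {m // m ∈ G} B))
      (fun u γ γ' h => by
        induction h with
        | refl => exact Relation.ReflTransGen.refl
        | tail _ hbc ih => exact ih.tail (fiberAdj_translate u hbc))
      (fun b hb => by
        obtain ⟨a, a', hne', heq⟩ := hBbin b hb
        exact ⟨a, a', Relation.ReflTransGen.single
          ⟨hne', a, a', 0, heq ▸ hb, Or.inl ⟨(zero_add a).symm, (zero_add a').symm⟩⟩, heq⟩)
      hker
    have hexy : Relation.ReflTransGen (fiberAdj K {m // m ∈ G} B) x.1 y.1 :=
      diff_mem_span_rel (fun a => Relation.ReflTransGen.refl)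
        (fun a b c hab => ⟨fun h => h.trans hab, fun h => h.trans (hsymRT hab)⟩) hM hxy
    -- transfer reachability
    have hstep : ∀ {γ γ' : {m // m ∈ G} →₀ ℕ}, fiberAdj K {m // m ∈ G} B γ γ' →
        (aeval fun m : {m // m ∈ G} => monomial m.1 (1 : K)) (monomial γ (1 : K))
          = (aeval fun m : {m // m ∈ G} => monomial m.1 (1 : K)) (monomial γ' (1 : K)) := by
      intro γ γ' h
      rw [hmono, hmono, fiberAdj_wt_eq hBJ' h]
    have reach : ∀ (δ : {m // m ∈ G} →₀ ℕ),
        Relation.ReflTransGen (fiberAdj K {m // m ∈ G} B) x.1 δ →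
        ∀ (hδ : (aeval fun m : {m // m ∈ G} => monomial m.1 (1 : K)) (monomial δ (1 : K))
          = monomial μ (1 : K)),
        (SimpleGraph.fromRel fun γ γ' : {γ : {m // m ∈ G} →₀ ℕ //
            (aeval fun m : {m // m ∈ G} => monomial m.1 (1 : K)) (monomial γ (1 : K))
              = monomial μ (1 : K)} => fiberAdj K _ B γ.1 γ'.1).Reachable x ⟨δ, hδ⟩ := by
      intro δ h
      induction h with
      | refl => intro hδ; exact (Subtype.ext rfl : x = ⟨x.1, hδ⟩) ▸ SimpleGraph.Reachable.refl x
      | @tail b c hab hbc ih =>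
          intro hc
          have hb : (aeval fun m : {m // m ∈ G} => monomial m.1 (1 : K)) (monomial b (1 : K))
              = monomial μ (1 : K) := (hstep hbc).trans hc
          refine (ih hb).trans (SimpleGraph.Adj.reachable ?_)
          refine (SimpleGraph.fromRel_adj _ _ _).mpr ⟨?_, Or.inl hbc⟩
          exact fun hEq => hbc.1 (congrArg Subtype.val hEq)
    exact reach y.1 hexy y.2
  · -- fibers connected → span = ker
    intro hconn
    -- walk lemma
    have hwalk : ∀ (μ : Fin n →₀ ℕ)
        (x y : {γ : {m // m ∈ G} →₀ ℕ //
          (aeval fun m : {m // m ∈ G} => monomial m.1 (1 : K)) (monomial γ (1 : K))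
            = monomial μ (1 : K)})
        (p : (SimpleGraph.fromRel fun γ γ' : {γ : {m // m ∈ G} →₀ ℕ //
            (aeval fun m : {m // m ∈ G} => monomial m.1 (1 : K)) (monomial γ (1 : K))
              = monomial μ (1 : K)} => fiberAdj K _ B γ.1 γ'.1).Walk x y),
        monomial x.1 (1 : K) - monomial y.1 1 ∈ Ideal.span B := by
      intro μ x y p
      induction p with
      | nil => simp
      | @cons u v z h p ih =>
          have hd : monomial u.1 (1 : K) - monomial v.1 1 ∈ Ideal.span B := by
            rcases (SimpleGraph.fromRel_adj _ _ _).mp h with ⟨-, h' | h'⟩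
            · exact fiberAdj_sub_mem h'
            · exact fiberAdj_sub_mem (fiberAdj_symm B h')
          have := add_mem hd ih
          rwa [sub_add_sub_cancel] at this
    apply le_antisymm
    · rw [Ideal.span_le]
      intro b hb
      exact RingHom.mem_ker.mpr (hBJ b hb)
    · intro f hf
      rw [RingHom.mem_ker] at hf
      have key : ∀ (N : ℕ) (f : MvPolynomial {m // m ∈ G} K), f.support.card ≤ N →
          (aeval fun m : {m // m ∈ G} => monomial m.1 (1 : K)) f = 0 →
          f ∈ Ideal.span B := by
        intro N
        induction N with
        | zero =>
            intro f hcard _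
            have hs : f.support = ∅ := Finset.card_eq_zero.mp (Nat.le_zero.mp hcard)
            have : f = 0 := by rwa [← MvPolynomial.support_eq_empty]
            rw [this]; exact zero_mem _
        | succ N ih =>
            intro f hcard hker
            by_cases h0 : f = 0
            · rw [h0]; exact zero_mem _
            obtain ⟨γ0, hγ0⟩ := MvPolynomial.support_nonempty.mpr h0
            set μ := Wt wv γ0 with hμ
            have hS : ∑ γ ∈ f.support, (if Wt wv γ = μ then coeff γ f else 0) = 0 := by
              have h := coeff_aeval wv f μ
              rw [hker] at h
              simpa using h.symm
            have hex : ∃ γ1 ∈ f.support, γ1 ≠ γ0 ∧ Wt wv γ1 = μ := by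
              by_contra hc
              push_neg at hc
              rw [Finset.sum_eq_single γ0
                (fun γ hγ hne => if_neg (hc γ hγ hne))
                (fun h => absurd hγ0 h), if_pos rfl] at hS
              exact MvPolynomial.mem_support_iff.mp hγ0 hS
            obtain ⟨γ1, hγ1s, hγ1ne, hγ1μ⟩ := hex
            have hx2 : (aeval fun m : {m // m ∈ G} => monomial m.1 (1 : K))
                (monomial γ0 (1 : K)) = monomial μ (1 : K) := by rw [hmono]
            have hy2 : (aeval fun m : {m // m ∈ G} => monomial m.1 (1 : K))
                (monomial γ1 (1 : K)) = monomial μ (1 : K) := by rw [hmono, hγ1μ]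
            have hconn' : (SimpleGraph.fromRel fun γ γ' : {γ : {m // m ∈ G} →₀ ℕ //
                (aeval fun m : {m // m ∈ G} => monomial m.1 (1 : K)) (monomial γ (1 : K))
                  = monomial μ (1 : K)} => fiberAdj K _ B γ.1 γ'.1).Connected := by
              rcases hconn μ with he | hc
              · exact (he.elim ⟨γ0, hx2⟩)
              · exact hc
            obtain ⟨p⟩ := hconn'.preconnected ⟨γ0, hx2⟩ ⟨γ1, hy2⟩
            have hd : monomial γ0 (1 : K) - monomial γ1 1 ∈ Ideal.span B := hwalk μ ⟨γ0, hx2⟩ ⟨γ1, hy2⟩ p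
            set c := coeff γ0 f with hc0
            set g := f - c • (monomial γ0 (1 : K) - monomial γ1 1) with hg
            have hgker : (aeval fun m : {m // m ∈ G} => monomial m.1 (1 : K)) g = 0 := by
              rw [hg, map_sub, map_smul, hker, map_sub, hmono, hmono, hγ1μ, ← hμ]
              simp
            have hne10 : ¬ γ1 = γ0 := hγ1ne
            have hgsupp : g.support ⊆ f.support.erase γ0 := by
              intro δ hδ
              have hδ0 : coeff δ g ≠ 0 := MvPolynomial.mem_support_iff.mp hδ
              rw [Finset.mem_erase]
              have hδγ0 : δ ≠ γ0 := by
                rintro rfl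
                apply hδ0
                rw [hg, coeff_sub, MvPolynomial.coeff_smul, coeff_sub, coeff_monomial,
                  coeff_monomial, if_pos rfl, if_neg hne10, ← hc0]
                simp
              refine ⟨hδγ0, ?_⟩
              by_contra hns
              apply hδ0
              have hcf : coeff δ f = 0 := MvPolynomial.notMem_support_iff.mp hns
              have hδ1 : ¬ γ1 = δ := fun h => hns (h ▸ hγ1s)
              rw [hg, coeff_sub, MvPolynomial.coeff_smul, coeff_sub, coeff_monomial,
                coeff_monomial, if_neg (fun h : γ0 = δ => hδγ0 h.symm), if_neg hδ1, hcf]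
              simp
            have hcard' : g.support.card ≤ N := by
              have h1 := Finset.card_le_card hgsupp
              rw [Finset.card_erase_of_mem hγ0] at h1
              omega
            have hgmem := ih g hcard' hgker
            have hfg : f = g + c • (monomial γ0 (1 : K) - monomial γ1 1) := by
              rw [hg]; ring
            rw [hfg]
            refine add_mem hgmem ?_
            rw [MvPolynomial.smul_eq_C_mul]
            exact Ideal.mul_mem_left _ _ hd
      exact key f.support.card f le_rfl hf
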